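/- arXiv:1506.03885 — 5 statements merged into one kernel-verified Lean document; each statement's English description precedes it below -/
import Mathlib

section
/- The limsup aggregation function is submixing: for every shuffle α of two sequences β and γ, min(limsup β, limsup γ) ≤ limsup α ≤ max(limsup β, limsup γ). -/
/-- `α` is a shuffle of `β` and `γ`: ℕ is partitioned into two infinite sets,
given by the ranges of the strictly monotone enumerations `e` and `g`, and
`α` restricted to these sets (in order) equals `β` and `γ` respectively. -/
def IsShuffle {X : Type*} (α β γ : ℕ → X) : Prop :=
  ∃ e g : ℕ → ℕ, StrictMono e ∧ StrictMono g ∧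
    (∀ n, (∃ k, e k = n) ∨ (∃ k, g k = n)) ∧
    (∀ k l, e k ≠ g l) ∧
    (∀ k, α (e k) = β k) ∧ (∀ k, α (g k) = γ k)

theorem limsup_subseq_le (u : ℕ → EReal) (e : ℕ → ℕ) (he : StrictMono e) :
    Filter.limsup (fun k => u (e k)) Filter.atTop ≤ Filter.limsup u Filter.atTop := by
  have h1 : Filter.limsup (fun k => u (e k)) Filter.atTop
      = Filter.limsup u (Filter.map e Filter.atTop) := Filter.limsup_comp u e Filter.atTop
  rw [h1]
  exact Filter.limsup_le_limsup_of_le (he.tendsto_atTop)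

/-- The limsup aggregation function is submixing. -/
theorem limsup_submixing (α β γ : ℕ → ℤ) (h : IsShuffle α β γ) :
    min (Filter.limsup (fun t => ((β t : ℝ) : EReal)) Filter.atTop)
        (Filter.limsup (fun t => ((γ t : ℝ) : EReal)) Filter.atTop) ≤
      Filter.limsup (fun t => ((α t : ℝ) : EReal)) Filter.atTop ∧
    Filter.limsup (fun t => ((α t : ℝ) : EReal)) Filter.atTop ≤
      max (Filter.limsup (fun t => ((β t : ℝ) : EReal)) Filter.atTop)
          (Filter.limsup (fun t => ((γ t : ℝ) : EReal)) Filter.atTop) := by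
  obtain ⟨e, g, hE, hG, hcov, _hdisj, hαβ, hαγ⟩ := h
  set u : ℕ → EReal := fun t => ((α t : ℝ) : EReal) with hu
  have hβu : (fun t => ((β t : ℝ) : EReal)) = fun k => u (e k) := by
    funext k; simp [hu, hαβ k]
  have hγu : (fun t => ((γ t : ℝ) : EReal)) = fun k => u (g k) := by
    funext k; simp [hu, hαγ k]
  constructor
  · refine le_trans (min_le_left _ _) ?_
    rw [hβu]; exact limsup_subseq_le u e hE
  · by_contra hlt
    push_neg at hlt
    obtain ⟨b, hb1, hb2⟩ := exists_between hlt
    have hβb : Filter.limsup (fun t => ((β t : ℝ) : EReal)) Filter.atTop < b :=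
      lt_of_le_of_lt (le_max_left _ _) hb1
    have hγb : Filter.limsup (fun t => ((γ t : ℝ) : EReal)) Filter.atTop < b :=
      lt_of_le_of_lt (le_max_right _ _) hb1
    have hβev := Filter.eventually_lt_of_limsup_lt hβb
    have hγev := Filter.eventually_lt_of_limsup_lt hγb
    rw [Filter.eventually_atTop] at hβev hγev
    obtain ⟨K, hK⟩ := hβev
    obtain ⟨L, hL⟩ := hγev
    have hev : ∀ᶠ n in Filter.atTop, u n ≤ b := by
      rw [Filter.eventually_atTop]
      refine ⟨max (e K) (g L), fun n hn => ?_⟩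
      rcases hcov n with ⟨k, hk⟩ | ⟨k, hk⟩
      · have : e K ≤ e k := le_trans (le_max_left _ _) (hk ▸ hn)
        have hKk : K ≤ k := hE.le_iff_le.mp this
        subst hk
        show ((α (e k) : ℝ) : EReal) ≤ b
        rw [hαβ k]; exact (hK k hKk).le
      · have : g L ≤ g k := le_trans (le_max_right _ _) (hk ▸ hn)
        have hLk : L ≤ k := hG.le_iff_le.mp this
        subst hk
        show ((α (g k) : ℝ) : EReal) ≤ b
        rw [hαγ k]; exact (hL k hLk).le
    have : Filter.limsup u Filter.atTop ≤ b := Filter.limsup_le_of_le (by isBoundedDefault) hev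
    exact absurd hb2 (not_lt.mpr this)
end

section
/- The parity aggregation function is submixing: if α is a shuffle of two priority sequences β and γ, then min(parity β, parity γ) ≤ parity α ≤ max(parity β, parity γ). -/
/-- Parity aggregation: `1` if the least priority occurring infinitely often
is even, `0` otherwise. -/
noncomputable def parity {n : ℕ} (α : ℕ → Fin n) : ℕ :=
  if Even (sInf {k : ℕ | {t | (α t : ℕ) = k}.Infinite}) then 1 else 0

lemma fiber_nonempty {n : ℕ} (hn : 0 < n) (δ : ℕ → Fin n) :
    {k : ℕ | {t | (δ t : ℕ) = k}.Infinite}.Nonempty := by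
  haveI : Nonempty (Fin n) := ⟨⟨0, hn⟩⟩
  obtain ⟨y, hy⟩ := Finite.exists_infinite_fiber δ
  rw [Set.infinite_coe_iff] at hy
  refine ⟨(y : ℕ), ?_⟩
  have : {t | (δ t : ℕ) = (y : ℕ)} = δ ⁻¹' {y} := by
    ext t; simp [Fin.val_inj]
  rw [Set.mem_setOf_eq, this]
  exact hy

lemma sInf_union_eq_min (A B : Set ℕ) (hA : A.Nonempty) (hB : B.Nonempty) :
    sInf (A ∪ B) = min (sInf A) (sInf B) := by
  apply le_antisymm
  · exact le_min (Nat.sInf_le (Or.inl (Nat.sInf_mem hA)))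
      (Nat.sInf_le (Or.inr (Nat.sInf_mem hB)))
  · rcases Nat.sInf_mem (hA.mono Set.subset_union_left) with hm | hm
    · exact min_le_of_left_le (Nat.sInf_le hm)
    · exact min_le_of_right_le (Nat.sInf_le hm)

/-- The parity aggregation function is submixing. -/
theorem parity_submixing {n : ℕ} (α β γ : ℕ → Fin n) (h : IsShuffle α β γ) :
    min (parity β) (parity γ) ≤ parity α ∧ parity α ≤ max (parity β) (parity γ) := by
  rcases Nat.eq_zero_or_pos n with rfl | hn
  · exact (α 0).elim0
  obtain ⟨e, g, he, hg, hcov, hdisj, hβ, hγ⟩ := h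
  have hunion : {k : ℕ | {t | (α t : ℕ) = k}.Infinite} =
      {k : ℕ | {t | (β t : ℕ) = k}.Infinite} ∪ {k : ℕ | {t | (γ t : ℕ) = k}.Infinite} := by
    ext k
    simp only [Set.mem_setOf_eq, Set.mem_union]
    constructor
    · intro hk
      have hsub : {t | (α t : ℕ) = k} ⊆
          e '' {s | (β s : ℕ) = k} ∪ g '' {s | (γ s : ℕ) = k} := by
        intro t ht
        rcases hcov t with ⟨l, rfl⟩ | ⟨l, rfl⟩
        · exact Or.inl ⟨l, by rw [Set.mem_setOf_eq, ← hβ l]; exact ht, rfl⟩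
        · exact Or.inr ⟨l, by rw [Set.mem_setOf_eq, ← hγ l]; exact ht, rfl⟩
      rcases Set.infinite_union.mp (hk.mono hsub) with h' | h'
      · exact Or.inl h'.of_image
      · exact Or.inr h'.of_image
    · rintro (h' | h')
      · refine ((h'.image he.injective.injOn).mono ?_)
        rintro _ ⟨s, hs, rfl⟩
        show (α (e s) : ℕ) = k
        rw [hβ s]; exact hs
      · refine ((h'.image hg.injective.injOn).mono ?_)
        rintro _ ⟨s, hs, rfl⟩
        show (α (g s) : ℕ) = k
        rw [hγ s]; exact hs
  have hβne := fiber_nonempty hn β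
  have hγne := fiber_nonempty hn γ
  have hmin : sInf {k : ℕ | {t | (α t : ℕ) = k}.Infinite} =
      min (sInf {k : ℕ | {t | (β t : ℕ) = k}.Infinite})
          (sInf {k : ℕ | {t | (γ t : ℕ) = k}.Infinite}) := by
    rw [hunion]; exact sInf_union_eq_min _ _ hβne hγne
  have hcase : parity α = parity β ∨ parity α = parity γ := by
    unfold parity
    rw [hmin]
    rcases le_total (sInf {k : ℕ | {t | (β t : ℕ) = k}.Infinite})
        (sInf {k : ℕ | {t | (γ t : ℕ) = k}.Infinite}) with hle | hle
    · left; rw [min_eq_left hle]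
    · right; rw [min_eq_right hle]
  rcases hcase with hc | hc
  · rw [hc]; exact ⟨min_le_left _ _, le_max_left _ _⟩
  · rw [hc]; exact ⟨min_le_right _ _, le_max_right _ _⟩
end

section
/- If f is shift-invariant and submixing, then for any n ≥ 1 sequences β_1, ..., β_n and any n-partite shuffle α of them, min_i f(β_i) ≤ f(α) ≤ max_i f(β_i). -/
/-- Prepend one element to an infinite sequence. -/
def prepend {X : Type*} (a : X) (α : ℕ → X) : ℕ → X
  | 0 => a
  | n + 1 => α n

/-- `α` is an `ι`-partite shuffle of the family `β`: ℕ partitions into the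
(infinite) ranges of strictly monotone enumerations `e j`, and `α` along
`e j` equals `β j`. -/
def IsPartiteShuffle {ι X : Type*} (α : ℕ → X) (β : ι → ℕ → X) : Prop :=
  ∃ e : ι → ℕ → ℕ, (∀ j, StrictMono (e j)) ∧
    (∀ m, ∃! p : ι × ℕ, e p.1 p.2 = m) ∧
    (∀ j k, α (e j k) = β j k)

theorem nPartite_submixing_aux (f : (ℕ → ℤ) → ℝ)
    (hsub : ∀ α β γ : ℕ → ℤ, IsShuffle α β γ →
      min (f β) (f γ) ≤ f α ∧ f α ≤ max (f β) (f γ)) :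
    ∀ n : ℕ, ∀ β : Fin (n + 1) → ℕ → ℤ, ∀ α : ℕ → ℤ, IsPartiteShuffle α β →
      (⨅ i, f (β i)) ≤ f α ∧ f α ≤ ⨆ i, f (β i) := by
  intro n
  induction n with
  | zero =>
    intro β α ⟨e, hmono, huniq, hval⟩
    -- `e 0` is a strictly monotone surjection, hence the identity
    have key : ∀ m, e 0 m = m := by
      intro m
      induction m using Nat.strong_induction_on with
      | _ m ih =>
        obtain ⟨⟨j, k⟩, hjk, _⟩ := huniq m
        have hj : j = 0 := Fin.fin_one_eq_zero j
        subst hj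
        have hkm : k ≤ m := hjk ▸ (hmono 0).le_apply
        rcases lt_or_eq_of_le hkm with hlt | heq
        · exact absurd (ih k hlt ▸ hjk) hlt.ne
        · exact heq ▸ hjk
    have hα : α = β 0 := by
      funext m
      have := hval 0 m
      rwa [key m] at this
    have h0 : ∀ i : Fin (0 + 1), β i = β 0 := fun i => by
      rw [Fin.fin_one_eq_zero i]
    have hiInf : (⨅ i, f (β i)) = f (β 0) :=
      le_antisymm (ciInf_le (Set.Finite.bddBelow (Set.finite_range _)) 0)
        (le_ciInf fun i => by rw [h0 i])
    have hiSup : (⨆ i, f (β i)) = f (β 0) :=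
      le_antisymm (ciSup_le fun i => by rw [h0 i])
        (le_ciSup (f := fun i => f (β i)) (Set.Finite.bddAbove (Set.finite_range _)) 0)
    rw [hα, hiInf, hiSup]
    exact ⟨le_refl _, le_refl _⟩
  | succ n ih =>
    intro β α ⟨e, hmono, huniq, hval⟩
    classical
    set L : Fin (n + 2) := Fin.last (n + 1) with hL
    set p : ℕ → Prop := fun m => ∃ q : Fin (n + 1) × ℕ, e q.1.castSucc q.2 = m with hp
    have hp_of : ∀ (j : Fin (n + 1)) (k : ℕ), p (e j.castSucc k) := fun j k => ⟨(j, k), rfl⟩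
    -- separation between the last block and the others
    have hsep : ∀ (j : Fin (n + 1)) (k l : ℕ), e j.castSucc k ≠ e L l := by
      intro j k l hEq
      obtain ⟨q, _, hu⟩ := huniq (e L l)
      have h1 : ((j.castSucc : Fin (n + 2)), k) = q := hu _ hEq
      have h2 : ((L : Fin (n + 2)), l) = q := hu _ rfl
      have : (j.castSucc : Fin (n + 2)) = L := by
        rw [← h2] at h1
        exact (Prod.mk.injEq _ _ _ _).mp h1 |>.1
      exact absurd this (Fin.castSucc_lt_last j).ne
    have hnotp : ∀ m, ¬ p m → ∃ k, e L k = m := by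
      intro m hm
      obtain ⟨⟨j, k⟩, hjk, _⟩ := huniq m
      by_cases hj : j = L
      · exact ⟨k, by rw [← hj]; exact hjk⟩
      · obtain ⟨j', rfl⟩ := Fin.exists_castSucc_eq.mpr hj
        exact absurd ⟨(j', k), hjk⟩ hm
    have hpinf : (setOf p).Infinite := by
      have hsub' : Set.range (e ((0 : Fin (n + 1)).castSucc)) ⊆ setOf p := by
        rintro m ⟨k, rfl⟩; exact hp_of 0 k
      exact (Set.infinite_range_of_injective (hmono _).injective).mono hsub'
    set γ : ℕ → ℤ := fun k => α (Nat.nth p k) with hγ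
    -- α is a 2-shuffle of β L and γ
    have hshuf : IsShuffle α (β L) γ := by
      refine ⟨e L, Nat.nth p, hmono L, Nat.nth_strictMono hpinf, ?_, ?_, fun k => hval L k,
        fun k => rfl⟩
      · intro m
        by_cases hm : p m
        · exact Or.inr ⟨Nat.count p m, Nat.nth_count hm⟩
        · exact Or.inl (hnotp m hm)
      · intro k l hEq
        obtain ⟨⟨j, k'⟩, hjk⟩ := Nat.nth_mem_of_infinite hpinf l
        exact hsep j k' k (by rw [hjk, ← hEq])
    -- γ is an (n+1)-partite shuffle of the first n+1 sequences
    have hpart : IsPartiteShuffle γ (fun j : Fin (n + 1) => β j.castSucc) := by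
      refine ⟨fun j k => Nat.count p (e j.castSucc k), ?_, ?_, ?_⟩
      · intro j k l hkl
        exact Nat.count_strict_mono (hp_of j k) (hmono j.castSucc hkl)
      · intro m
        obtain ⟨⟨j, k⟩, hjk⟩ := Nat.nth_mem_of_infinite hpinf m
        refine ⟨(j, k), ?_, ?_⟩
        · show Nat.count p (e j.castSucc k) = m
          rw [hjk, Nat.count_nth_of_infinite hpinf]
        · rintro ⟨j', k'⟩ h'
          have h'2 : Nat.count p (e j'.castSucc k') = m := h'
          have h'' : e j'.castSucc k' = e j.castSucc k := by
            have h1 : Nat.nth p (Nat.count p (e j'.castSucc k')) = e j'.castSucc k' :=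
              Nat.nth_count (hp_of j' k')
            rw [h'2] at h1
            rw [← h1, hjk]
          obtain ⟨q, _, hu⟩ := huniq (e j.castSucc k)
          have h1 : ((j'.castSucc : Fin (n + 2)), k') = q := hu _ h''
          have h2 : ((j.castSucc : Fin (n + 2)), k) = q := hu _ rfl
          rw [← h2] at h1
          have hj := congrArg Prod.fst h1
          have hk := congrArg Prod.snd h1
          exact Prod.ext (Fin.castSucc_injective _ (by exact_mod_cast hj)) hk
      · intro j k
        show α (Nat.nth p (Nat.count p (e j.castSucc k))) = β j.castSucc k
        rw [Nat.nth_count (hp_of j k), hval]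
    obtain ⟨ih1, ih2⟩ := ih (fun j => β j.castSucc) γ hpart
    obtain ⟨hs1, hs2⟩ := hsub α (β L) γ hshuf
    constructor
    · have h1 : (⨅ i, f (β i)) ≤ f (β L) := ciInf_le (Set.Finite.bddBelow (Set.finite_range _)) L
      have h2 : (⨅ i, f (β i)) ≤ ⨅ j : Fin (n + 1), f (β j.castSucc) :=
        le_ciInf fun j => ciInf_le (Set.Finite.bddBelow (Set.finite_range _)) j.castSucc
      exact le_trans (le_min h1 (h2.trans ih1)) hs1
    · have h1 : f (β L) ≤ ⨆ i, f (β i) := le_ciSup (f := fun i => f (β i)) (Set.Finite.bddAbove (Set.finite_range _)) L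
      have h2 : (⨆ j : Fin (n + 1), f (β j.castSucc)) ≤ ⨆ i, f (β i) :=
        ciSup_le fun j => le_ciSup (f := fun i => f (β i)) (Set.Finite.bddAbove (Set.finite_range _)) j.castSucc
      exact hs2.trans (max_le h1 (ih2.trans h2))

/-- For a shift-invariant submixing function, the value of an `n`-partite
shuffle lies between the min and the max of the values of its factors. -/
theorem nPartite_submixing (f : (ℕ → ℤ) → ℝ)
    (hshift : ∀ (a : ℤ) (σ : ℕ → ℤ), f (prepend a σ) = f σ)
    (hsub : ∀ α β γ : ℕ → ℤ, IsShuffle α β γ →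
      min (f β) (f γ) ≤ f α ∧ f α ≤ max (f β) (f γ))
    (n : ℕ) (hn : 1 ≤ n) (β : Fin n → ℕ → ℤ) (α : ℕ → ℤ)
    (h : IsPartiteShuffle α β) :
    (⨅ i, f (β i)) ≤ f α ∧ f α ≤ ⨆ i, f (β i) := by
  obtain ⟨m, rfl⟩ : ∃ m, n = m + 1 := ⟨n - 1, (Nat.succ_pred_eq_of_pos hn).symm⟩
  exact nPartite_submixing_aux f hsub m β α h
end

section
/- If f : (ℕ → ℤ) → ℝ is shift-invariant and submixing, α : ℕ → ℤ, and there are finitely many sequences β_1,...,β_n each with f(β_i) = w such that some suffix of α is an n-partite shuffle of suffixes of the β_i, then f(α) = w. -/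
/-- The suffix of a sequence starting at index `ℓ`. -/
def suffix {X : Type*} (σ : ℕ → X) (ℓ : ℕ) : ℕ → X := fun t => σ (ℓ + t)

lemma suffix_val (f : (ℕ → ℤ) → ℝ)
    (hshift : ∀ (a : ℤ) (σ : ℕ → ℤ), f (prepend a σ) = f σ)
    (σ : ℕ → ℤ) (ℓ : ℕ) : f (suffix σ ℓ) = f σ := by
  induction ℓ with
  | zero => congr 1; funext t; simp [suffix]
  | succ ℓ ih =>
    have h1 : prepend (σ ℓ) (suffix σ (ℓ+1)) = suffix σ ℓ := by
      funext t
      cases t with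
      | zero => show σ ℓ = σ (ℓ + 0); simp
      | succ t => show σ (ℓ + 1 + t) = σ (ℓ + (t+1)); congr 1; omega
    calc f (suffix σ (ℓ+1)) = f (prepend (σ ℓ) (suffix σ (ℓ+1))) := (hshift _ _).symm
    _ = f (suffix σ ℓ) := by rw [h1]
    _ = f σ := ih

lemma partite_val (f : (ℕ → ℤ) → ℝ)
    (hsub : ∀ α β γ : ℕ → ℤ, IsShuffle α β γ →
      min (f β) (f γ) ≤ f α ∧ f α ≤ max (f β) (f γ)) :
    ∀ (n : ℕ) (β : Fin (n+1) → ℕ → ℤ) (w : ℝ), (∀ i, f (β i) = w) →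
      ∀ α : ℕ → ℤ, IsPartiteShuffle α β → f α = w := by
  intro n
  induction n with
  | zero =>
    intro β w hβ α ⟨e, he, hcov, heq⟩
    have hsurj : ∀ m, ∃ k, e 0 k = m := by
      intro m
      obtain ⟨⟨j, k⟩, hjk, -⟩ := hcov m
      exact ⟨k, by rwa [Fin.fin_one_eq_zero j] at hjk⟩
    have hid : ∀ k, e 0 k = k := by
      intro k
      induction k using Nat.strong_induction_on with
      | _ k ih =>
        obtain ⟨j, hj⟩ := hsurj k
        rcases lt_trichotomy j k with h1 | h1 | h1
        · have := ih j h1; omega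
        · rwa [h1] at hj
        · have h2 : j ≤ e 0 j := (he 0).le_apply; omega
    have : α = β 0 := by
      funext k
      have := heq 0 k
      rwa [hid k] at this
    rw [this, hβ 0]
  | succ n IH =>
    intro β w hβ α ⟨e, he, hcov, heq⟩
    classical
    set p : ℕ → Prop := fun m => ∃ j : Fin (n+1), ∃ k, e j.castSucc k = m with hp
    have hmem : ∀ (j : Fin (n+1)) k, p (e j.castSucc k) := fun j k => ⟨j, k, rfl⟩
    have hpinf : (setOf p).Infinite :=
      Set.infinite_of_injective_forall_mem
        (f := e (Fin.castSucc 0)) (he _).injective (fun k => hmem 0 k)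
    set g : ℕ → ℕ := Nat.nth p with hg
    have hgmono : StrictMono g := Nat.nth_strictMono hpinf
    have hgmem : ∀ l, p (g l) := fun l => Nat.nth_mem_of_infinite hpinf l
    set γ : ℕ → ℤ := fun k => α (g k) with hγ
    -- uniqueness helper
    have huniq : ∀ (a c : Fin (n+2)) (b d : ℕ), e a b = e c d → a = c ∧ b = d := by
      intro a c b d hacbd
      obtain ⟨q, -, hq⟩ := hcov (e c d)
      have h1 := hq (a, b) hacbd
      have h2 := hq (c, d) rfl
      have h3 := h1.trans h2.symm
      exact ⟨congrArg Prod.fst h3, congrArg Prod.snd h3⟩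
    have hshuf : IsShuffle α (β (Fin.last (n+1))) γ := by
      refine ⟨e (Fin.last (n+1)), g, he _, hgmono, ?_, ?_, fun k => heq _ k, fun k => rfl⟩
      · intro m
        obtain ⟨⟨j, k⟩, hjk, -⟩ := hcov m
        rcases Fin.eq_castSucc_or_eq_last j with ⟨j', rfl⟩ | rfl
        · right
          have hpm : p m := ⟨j', k, hjk⟩
          exact ⟨Nat.count p m, Nat.nth_count hpm⟩
        · exact Or.inl ⟨k, hjk⟩
      · intro k l hkl
        obtain ⟨j', k', hj'⟩ := hgmem l
        have := (huniq _ _ _ _ (hkl.trans hj'.symm)).1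
        exact absurd this.symm (Fin.castSucc_lt_last j').ne
    set e' : Fin (n+1) → ℕ → ℕ := fun j k => Nat.count p (e j.castSucc k) with he'
    have hγshuf : IsPartiteShuffle γ (fun j : Fin (n+1) => β j.castSucc) := by
      refine ⟨e', ?_, ?_, ?_⟩
      · intro j a b hab
        exact Nat.count_strict_mono (hmem j a) ((he _) hab)
      · intro m
        obtain ⟨j, k, hjk⟩ := hgmem m
        refine ⟨(j, k), ?_, ?_⟩
        · show Nat.count p (e j.castSucc k) = m
          rw [hjk]; exact Nat.count_nth_of_infinite hpinf m
        · rintro ⟨j', k'⟩ h'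
          have h'' : Nat.count p (e j'.castSucc k') = m := h'
          have hne : e j'.castSucc k' = e j.castSucc k := by
            have h3 := congrArg (Nat.nth p) h''
            rw [Nat.nth_count (hmem j' k')] at h3
            exact h3.trans hjk.symm
          have := hne
          obtain ⟨hj, hk⟩ := huniq _ _ _ _ this
          have : j' = j := Fin.castSucc_injective _ hj
          simp [this, hk]
      · intro j k
        show α (g (Nat.count p (e j.castSucc k))) = β j.castSucc k
        rw [hg, Nat.nth_count (hmem j k)]
        exact heq _ k
    have hfγ : f γ = w := IH _ w (fun i => hβ i.castSucc) γ hγshuf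
    have := hsub α (β (Fin.last (n+1))) γ hshuf
    rw [hβ, hfγ] at this
    simp at this
    linarith [this.1, this.2]

/-- Payoff-transfer lemma: if some suffix of `α` is an `n`-partite shuffle of
suffixes of sequences all of value `w` under a shift-invariant submixing `f`,
then `f α = w`. -/
theorem payoff_transfer (f : (ℕ → ℤ) → ℝ)
    (hshift : ∀ (a : ℤ) (σ : ℕ → ℤ), f (prepend a σ) = f σ)
    (hsub : ∀ α β γ : ℕ → ℤ, IsShuffle α β γ →
      min (f β) (f γ) ≤ f α ∧ f α ≤ max (f β) (f γ))
    (n : ℕ) (hn : 1 ≤ n) (β : Fin n → ℕ → ℤ) (w : ℝ)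
    (hβ : ∀ i, f (β i) = w) (α : ℕ → ℤ) (ℓ : ℕ) (ℓs : Fin n → ℕ)
    (h : IsPartiteShuffle (suffix α ℓ) (fun i => suffix (β i) (ℓs i))) :
    f α = w := by
  obtain ⟨m, rfl⟩ : ∃ m, n = m + 1 := ⟨n - 1, by omega⟩
  have h1 : f (suffix α ℓ) = w :=
    partite_val f hsub m (fun i => suffix (β i) (ℓs i)) w
      (fun i => (suffix_val f hshift (β i) (ℓs i)).trans (hβ i)) (suffix α ℓ) h
  rw [← suffix_val f hshift α ℓ, h1]
end

section
/- If α is a shuffle of β and γ and all three sequences take values in [-M, M], then every Cesàro average of α is a convex combination of Cesàro averages (of some prefix lengths) of β and γ, up to an error of at most 2M/t; consequently limsup of Cesàro averages of α is at most max of the limsups for β and γ. -/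
open scoped Classical
open Finset Filter

/-- Cesàro average of the first `t` entries of a sequence (0 for `t = 0`). -/
noncomputable def cesaro (σ : ℕ → ℤ) (t : ℕ) : ℝ :=
  (∑ r ∈ Finset.range t, (σ r : ℝ)) / t

lemma dc_eq_range (S : Finset ℕ) (h : ∀ a b : ℕ, a ≤ b → b ∈ S → a ∈ S) :
    S = Finset.range S.card := by
  have hsub : S ⊆ Finset.range S.card := by
    intro x hx
    rw [Finset.mem_range]
    by_contra hlt
    push_neg at hlt
    have hss : Finset.range (x + 1) ⊆ S := fun y hy =>
      h y x (Nat.lt_succ_iff.mp (Finset.mem_range.mp hy)) hx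
    have := Finset.card_le_card hss
    simp [Finset.card_range] at this
    omega
  exact Finset.eq_of_subset_of_card_le hsub (by simp)

lemma filter_exists_eq_image (e : ℕ → ℕ) (he : StrictMono e) (t : ℕ) :
    ((Finset.range t).filter fun i => ∃ k, e k = i) =
      Finset.image e
        (Finset.range (((Finset.range t).filter fun i => ∃ k, e k = i).card)) := by
  set K := (Finset.range t).filter (fun k => e k < t) with hK
  have hKdc : ∀ a b : ℕ, a ≤ b → b ∈ K → a ∈ K := by
    intro a b hab hb
    simp only [hK, Finset.mem_filter, Finset.mem_range] at hb ⊢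
    exact ⟨lt_of_le_of_lt hab hb.1,
      lt_of_le_of_lt (he.monotone hab) hb.2⟩
  have hmain : ((Finset.range t).filter fun i => ∃ k, e k = i) = Finset.image e K := by
    ext i
    simp only [Finset.mem_filter, Finset.mem_range, Finset.mem_image, hK]
    constructor
    · rintro ⟨hi, k, rfl⟩
      exact ⟨k, ⟨lt_of_le_of_lt (he.le_apply) hi, hi⟩, rfl⟩
    · rintro ⟨k, ⟨_, hk⟩, rfl⟩
      exact ⟨hk, k, rfl⟩
  rw [hmain, Finset.card_image_of_injective _ he.injective, ← dc_eq_range K hKdc]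

lemma cesaro_abs_le (σ : ℕ → ℤ) (M : ℤ) (h : ∀ t, |σ t| ≤ M) (t : ℕ) :
    |cesaro σ t| ≤ (M : ℝ) := by
  have hM0 : (0 : ℝ) ≤ (M : ℝ) := by
    have := (abs_nonneg (σ 0)).trans (h 0)
    exact_mod_cast this
  rcases Nat.eq_zero_or_pos t with rfl | ht
  · simp [cesaro, hM0]
  · have hb : |∑ r ∈ Finset.range t, (σ r : ℝ)| ≤ t * M := by
      calc |∑ r ∈ Finset.range t, (σ r : ℝ)| ≤ ∑ r ∈ Finset.range t, |(σ r : ℝ)| :=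
            Finset.abs_sum_le_sum_abs _ _
        _ ≤ ∑ r ∈ Finset.range t, (M : ℝ) := by
            refine Finset.sum_le_sum fun r _ => ?_
            have := h r
            exact_mod_cast (by exact_mod_cast this : |(σ r : ℝ)| ≤ (M : ℝ))
        _ = t * M := by simp [mul_comm]
    have htpos : (0 : ℝ) < t := by exact_mod_cast ht
    rw [cesaro, abs_div, abs_of_pos htpos, div_le_iff₀ htpos]
    linarith [hb]

/-- A Cesàro average of a shuffle is a convex combination of Cesàro averages
of its factors; consequently the limsup of Cesàro averages of the shuffle is
at most the max of the limsups of its factors. -/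
theorem shuffle_cesaro (α β γ : ℕ → ℤ) (M : ℤ)
    (hα : ∀ t, |α t| ≤ M) (hβ : ∀ t, |β t| ≤ M) (hγ : ∀ t, |γ t| ≤ M)
    (e g : ℕ → ℕ) (he : StrictMono e) (hg : StrictMono g)
    (hcover : ∀ n, (∃ k, e k = n) ∨ (∃ k, g k = n))
    (hdisj : ∀ k l, e k ≠ g l)
    (hβe : ∀ k, α (e k) = β k) (hγg : ∀ k, α (g k) = γ k) :
    (∀ t, 1 ≤ t →
      cesaro α t =
        (((((Finset.range t).filter fun i => ∃ k, e k = i).card : ℕ) : ℝ) / t) *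
          cesaro β ((Finset.range t).filter fun i => ∃ k, e k = i).card +
        (((((Finset.range t).filter fun i => ∃ k, g k = i).card : ℕ) : ℝ) / t) *
          cesaro γ ((Finset.range t).filter fun i => ∃ k, g k = i).card) ∧
    Filter.limsup (cesaro α) Filter.atTop ≤
      max (Filter.limsup (cesaro β) Filter.atTop)
          (Filter.limsup (cesaro γ) Filter.atTop) := by

  have hdisjt : ∀ t : ℕ, Disjoint ((Finset.range t).filter fun i => ∃ k, e k = i)
      ((Finset.range t).filter fun i => ∃ k, g k = i) := by
    intro t
    rw [Finset.disjoint_left]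
    rintro i hi1 hi2
    simp only [Finset.mem_filter] at hi1 hi2
    obtain ⟨_, k, rfl⟩ := hi1
    obtain ⟨_, l, hl⟩ := hi2
    exact hdisj k l hl.symm
  have hunion : ∀ t : ℕ, ((Finset.range t).filter fun i => ∃ k, e k = i) ∪
      ((Finset.range t).filter fun i => ∃ k, g k = i) = Finset.range t := by
    intro t
    ext i
    simp only [Finset.mem_union, Finset.mem_filter]
    constructor
    · rintro (h | h) <;> exact h.1
    · intro hi
      rcases hcover i with h | h
      · exact Or.inl ⟨hi, h⟩
      · exact Or.inr ⟨hi, h⟩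
  have hcardsum : ∀ t : ℕ, ((Finset.range t).filter fun i => ∃ k, e k = i).card +
      ((Finset.range t).filter fun i => ∃ k, g k = i).card = t := by
    intro t
    rw [← Finset.card_union_of_disjoint (hdisjt t), hunion, Finset.card_range]
  -- sums over the two filters
  have hsumE : ∀ t : ℕ, ∑ i ∈ (Finset.range t).filter (fun i => ∃ k, e k = i), (α i : ℝ) =
      ∑ k ∈ Finset.range ((Finset.range t).filter fun i => ∃ k, e k = i).card, (β k : ℝ) := by
    intro t
    conv_lhs => rw [filter_exists_eq_image e he t]
    rw [Finset.sum_image (fun a _ b _ h => he.injective h)]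
    exact Finset.sum_congr rfl fun k _ => by rw [hβe]
  have hsumG : ∀ t : ℕ, ∑ i ∈ (Finset.range t).filter (fun i => ∃ k, g k = i), (α i : ℝ) =
      ∑ k ∈ Finset.range ((Finset.range t).filter fun i => ∃ k, g k = i).card, (γ k : ℝ) := by
    intro t
    conv_lhs => rw [filter_exists_eq_image g hg t]
    rw [Finset.sum_image (fun a _ b _ h => hg.injective h)]
    exact Finset.sum_congr rfl fun k _ => by rw [hγg]
  have hsum : ∀ t : ℕ, ∑ r ∈ Finset.range t, (α r : ℝ) =
      (∑ k ∈ Finset.range ((Finset.range t).filter fun i => ∃ k, e k = i).card, (β k : ℝ)) +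
      (∑ k ∈ Finset.range ((Finset.range t).filter fun i => ∃ k, g k = i).card, (γ k : ℝ)) := by
    intro t
    rw [← hsumE, ← hsumG, ← Finset.sum_union (hdisjt t), hunion]
  have hid : ∀ t, 1 ≤ t →
      cesaro α t =
        (((((Finset.range t).filter fun i => ∃ k, e k = i).card : ℕ) : ℝ) / t) *
          cesaro β ((Finset.range t).filter fun i => ∃ k, e k = i).card +
        (((((Finset.range t).filter fun i => ∃ k, g k = i).card : ℕ) : ℝ) / t) *
          cesaro γ ((Finset.range t).filter fun i => ∃ k, g k = i).card := by
    intro t ht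
    have htpos : (0 : ℝ) < t := by exact_mod_cast ht
    have key : ∀ (p : ℕ) (σ : ℕ → ℤ),
        ((p : ℝ) / t) * cesaro σ p = (∑ k ∈ Finset.range p, (σ k : ℝ)) / t := by
      intro p σ
      rcases Nat.eq_zero_or_pos p with rfl | hp
      · simp [cesaro]
      · have hppos : (0 : ℝ) < p := by exact_mod_cast hp
        rw [cesaro]
        field_simp
    rw [key, key, cesaro, hsum t, add_div]
  refine ⟨hid, ?_⟩
  -- growth of the two counts
  have hgrow : ∀ (f : ℕ → ℕ), StrictMono f → ∀ N : ℕ, ∀ᶠ t in Filter.atTop,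
      N ≤ ((Finset.range t).filter fun i => ∃ k, f k = i).card := by
    intro f hf N
    filter_upwards [Filter.eventually_ge_atTop (f N + 1)] with t ht
    have hsub : Finset.image f (Finset.range N) ⊆
        (Finset.range t).filter fun i => ∃ k, f k = i := by
      intro i hi
      simp only [Finset.mem_image, Finset.mem_range] at hi
      obtain ⟨k, hk, rfl⟩ := hi
      simp only [Finset.mem_filter, Finset.mem_range]
      exact ⟨lt_of_lt_of_le (hf hk) (by omega), k, rfl⟩
    calc N = (Finset.image f (Finset.range N)).card := by
          rw [Finset.card_image_of_injective _ hf.injective, Finset.card_range]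
      _ ≤ _ := Finset.card_le_card hsub
  -- boundedness
  have hbβ : Filter.IsBoundedUnder (· ≤ ·) Filter.atTop (cesaro β) :=
    ⟨(M : ℝ), Filter.eventually_map.mpr <| Filter.Eventually.of_forall
      fun t => (abs_le.mp (cesaro_abs_le β M hβ t)).2⟩
  have hbγ : Filter.IsBoundedUnder (· ≤ ·) Filter.atTop (cesaro γ) :=
    ⟨(M : ℝ), Filter.eventually_map.mpr <| Filter.Eventually.of_forall
      fun t => (abs_le.mp (cesaro_abs_le γ M hγ t)).2⟩
  have hcb : Filter.IsCoboundedUnder (· ≤ ·) Filter.atTop (cesaro α) :=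
    Filter.IsBoundedUnder.isCoboundedUnder_le
      ⟨(-M : ℝ), Filter.eventually_map.mpr <| Filter.Eventually.of_forall
        fun t => (abs_le.mp (cesaro_abs_le α M hα t)).1⟩
  refine le_of_forall_gt_imp_ge_of_dense fun c hc => ?_
  have h1 := Filter.eventually_lt_of_limsup_lt (lt_of_le_of_lt (le_max_left _ _) hc) hbβ
  have h2 := Filter.eventually_lt_of_limsup_lt (lt_of_le_of_lt (le_max_right _ _) hc) hbγ
  obtain ⟨N1, hN1⟩ := Filter.eventually_atTop.mp h1
  obtain ⟨N2, hN2⟩ := Filter.eventually_atTop.mp h2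
  apply Filter.limsup_le_of_le hcb
  filter_upwards [hgrow e he N1, hgrow g hg N2, Filter.eventually_ge_atTop 1] with t hp hq ht1
  rw [hid t ht1]
  have htpos : (0 : ℝ) < t := by exact_mod_cast ht1
  set p := ((Finset.range t).filter fun i => ∃ k, e k = i).card with hpdef
  set q := ((Finset.range t).filter fun i => ∃ k, g k = i).card with hqdef
  have h3 : cesaro β p ≤ c := (hN1 p hp).le
  have h4 : cesaro γ q ≤ c := (hN2 q hq).le
  have hnn1 : (0 : ℝ) ≤ (p : ℝ) / t := by positivity
  have hnn2 : (0 : ℝ) ≤ (q : ℝ) / t := by positivity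
  calc ((p : ℝ) / t) * cesaro β p + ((q : ℝ) / t) * cesaro γ q
      ≤ ((p : ℝ) / t) * c + ((q : ℝ) / t) * c :=
        add_le_add (mul_le_mul_of_nonneg_left h3 hnn1) (mul_le_mul_of_nonneg_left h4 hnn2)
    _ = (((p : ℝ) + q) / t) * c := by ring
    _ = c := by
        rw [← Nat.cast_add, hcardsum t]
        field_simp
end
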